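/- Let c ∈ (0,1). There exists a constant C > 0 depending only on c with the following property. Let n ≥ 1 and let A : 𝔻* → SL₂(ℂ) be a family with entries holomorphic on 𝔻* and meromorphic at 0, such that A(z) is loxodromic for every z ∈ 𝔻*, the trace satisfies tr(A(z)) = z^{−n} f(z) with f holomorphic on 𝔻 and f(0) ≠ 0, and ℓ(A(z)) ≥ 2cn·log(1/|z|) for all 0 < |z| < c, where ℓ(A) := 2·log(spectral radius of A). Then the leading Laurent coefficient satisfies |f(0)| ≥ C^{−1} e^{−Cn}. (This is the lower bound of Proposition 4.2 on the leading coefficient A₀(γ) of the Laurent expansion of tr(γ_z), with ℓ^{na}(γ) = 2n.) -/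

import Mathlib

noncomputable section

/-- The spectral radius of a `2×2` complex matrix: the largest absolute value of an
eigenvalue. -/
def spectralRadC (A : Matrix (Fin 2) (Fin 2) ℂ) : ℝ :=
  sSup {r : ℝ | ∃ μ ∈ spectrum ℂ A, r = ‖μ‖}

/-- The (translation) length `ℓ(A) = 2 log(spectral radius of A)`. -/
def matLength (A : Matrix (Fin 2) (Fin 2) ℂ) : ℝ := 2 * Real.log (spectralRadC A)

/-- A matrix is loxodromic if its two eigenvalues have distinct absolute values. -/
def IsLoxodromic (A : Matrix (Fin 2) (Fin 2) ℂ) : Prop :=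
  ∃ μ ∈ spectrum ℂ A, ∃ ν ∈ spectrum ℂ A, ‖μ‖ ≠ ‖ν‖

lemma mem_spectrum_fin_two {A : Matrix (Fin 2) (Fin 2) ℂ} {μ : ℂ} :
    μ ∈ spectrum ℂ A ↔ μ ^ 2 - A.trace * μ + A.det = 0 := by
  rw [spectrum.mem_iff, Matrix.isUnit_iff_isUnit_det, isUnit_iff_ne_zero, not_not]
  have h : (algebraMap ℂ (Matrix (Fin 2) (Fin 2) ℂ) μ - A).det
      = μ ^ 2 - A.trace * μ + A.det := by
    rw [Matrix.det_fin_two, Matrix.det_fin_two, Matrix.trace_fin_two]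
    simp [Matrix.sub_apply, Matrix.algebraMap_matrix_apply]
    ring
  rw [h]

lemma lox_struct {A : Matrix (Fin 2) (Fin 2) ℂ} (hdet : A.det = 1)
    (hlox : IsLoxodromic A) :
    ∃ μ : ℂ, 1 < ‖μ‖ ∧ A.trace = μ + μ⁻¹ ∧ spectralRadC A = ‖μ‖ := by
  obtain ⟨μ₀, hμ₀, ν, hν, hne⟩ := hlox
  rw [mem_spectrum_fin_two, hdet] at hμ₀ hν
  have hμ₀0 : μ₀ ≠ 0 := by rintro rfl; simp at hμ₀
  have ht : A.trace = μ₀ + μ₀⁻¹ := by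
    field_simp
    linear_combination -hμ₀
  have hνeq : ν = μ₀⁻¹ := by
    rw [ht] at hν
    have hinv : μ₀ * μ₀⁻¹ = 1 := mul_inv_cancel₀ hμ₀0
    have : (ν - μ₀) * (ν - μ₀⁻¹) = 0 := by linear_combination hν + hinv
    rcases mul_eq_zero.1 this with h | h
    · exact absurd (by rw [sub_eq_zero.1 h]) hne
    · exact sub_eq_zero.1 h
  have hne1 : ‖μ₀‖ ≠ 1 := by
    intro h1
    apply hne
    rw [hνeq, norm_inv, h1, inv_one]
  -- choose μ with norm > 1
  obtain ⟨μ, hμ1, htr⟩ : ∃ μ : ℂ, 1 < ‖μ‖ ∧ A.trace = μ + μ⁻¹ := by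
    rcases lt_or_gt_of_ne hne1 with h | h
    · refine ⟨μ₀⁻¹, ?_, by rw [ht, inv_inv, add_comm]⟩
      rw [norm_inv]
      exact (one_lt_inv₀ (norm_pos_iff.2 hμ₀0)).2 h
    · exact ⟨μ₀, h, ht⟩
  have hμ0 : μ ≠ 0 := norm_pos_iff.1 (lt_trans zero_lt_one hμ1)
  have hinvμ : μ * μ⁻¹ = 1 := mul_inv_cancel₀ hμ0
  refine ⟨μ, hμ1, htr, ?_⟩
  have hspec : spectrum ℂ A = {μ, μ⁻¹} := by
    ext x
    rw [mem_spectrum_fin_two, hdet, htr]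
    constructor
    · intro hx
      have : (x - μ) * (x - μ⁻¹) = 0 := by linear_combination hx + hinvμ
      rcases mul_eq_zero.1 this with h | h
      · exact Or.inl (sub_eq_zero.1 h)
      · exact Or.inr (sub_eq_zero.1 h)
    · rintro (rfl | rfl)
      · linear_combination -hinvμ
      · linear_combination -hinvμ
  have hset : {r : ℝ | ∃ μ' ∈ spectrum ℂ A, r = ‖μ'‖} = {‖μ‖, ‖μ⁻¹‖} := by
    rw [hspec]; ext r
    simp only [Set.mem_setOf_eq, Set.mem_insert_iff, Set.mem_singleton_iff]
    constructor
    · rintro ⟨x, (rfl | rfl), rfl⟩ <;> simp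
    · rintro (rfl | rfl)
      · exact ⟨μ, Or.inl rfl, rfl⟩
      · exact ⟨μ⁻¹, Or.inr rfl, rfl⟩
  rw [spectralRadC, hset, csSup_pair, max_eq_left]
  rw [norm_inv]
  exact le_trans (inv_le_one_of_one_le₀ hμ1.le) hμ1.le


set_option maxHeartbeats 1000000 in
/-- **Lower bound of Proposition 4.2** on the leading Laurent coefficient of the trace of a
degenerating loxodromic family. -/
theorem leading_coefficient_lower_bound :
    ∀ c ∈ Set.Ioo (0 : ℝ) 1, ∃ C : ℝ, 0 < C ∧
      ∀ n : ℕ, 1 ≤ n → ∀ A : ℂ → Matrix (Fin 2) (Fin 2) ℂ, ∀ f : ℂ → ℂ,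
        (∀ z ∈ Metric.ball (0 : ℂ) 1 \ {0}, (A z).det = 1) →
        (∀ i j : Fin 2, ∃ (N : ℕ) (g : ℂ → ℂ),
          DifferentiableOn ℂ g (Metric.ball 0 1) ∧
          ∀ z ∈ Metric.ball (0 : ℂ) 1 \ {0}, A z i j = g z / z ^ N) →
        (∀ z ∈ Metric.ball (0 : ℂ) 1 \ {0}, IsLoxodromic (A z)) →
        DifferentiableOn ℂ f (Metric.ball 0 1) → f 0 ≠ 0 →
        (∀ z ∈ Metric.ball (0 : ℂ) 1 \ {0}, (A z).trace = f z / z ^ n) →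
        (∀ z : ℂ, 0 < ‖z‖ → ‖z‖ < c →
          2 * c * n * Real.log (1 / ‖z‖) ≤ matLength (A z)) →
        C⁻¹ * Real.exp (-C * n) ≤ ‖f 0‖ := by
  rintro c ⟨hc0, hc1⟩
  set r : ℝ := c / 2 with hrdef
  have hr0 : 0 < r := by positivity
  have hrc : r < c := by simp only [hrdef]; linarith
  have hr1 : r < 1 := by simp only [hrdef]; linarith
  set L : ℝ := Real.log (1 / r) with hLdef
  have hL0 : 0 < L := Real.log_pos (by rw [lt_div_iff₀ hr0]; linarith)
  set δ : ℝ := 1 - Real.exp (-(2 * c * L)) with hδdef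
  have hδ0 : 0 < δ := by
    have : Real.exp (-(2 * c * L)) < 1 := Real.exp_lt_one_iff.2 (by nlinarith)
    simp only [hδdef]; linarith
  set K : ℝ := (1 - c) * L with hKdef
  have hK0 : 0 ≤ K := by
    have : 0 ≤ 1 - c := by linarith
    positivity
  set C : ℝ := max K δ⁻¹ + 1 with hCdef
  have hC0 : 0 < C :=
    add_pos_of_nonneg_of_pos (le_trans hK0 (le_max_left _ _)) one_pos
  refine ⟨C, hC0, ?_⟩
  intro n hn A f hdet hmero hlox hf hf0 htr hlen
  simp only [matLength] at hlen
  -- the pointwise structure at a nonzero point of the ball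
  have hstruct : ∀ z ∈ Metric.ball (0 : ℂ) 1 \ {0},
      ∃ μ : ℂ, 1 < ‖μ‖ ∧ f z = (μ + μ⁻¹) * z ^ n ∧
        spectralRadC (A z) = ‖μ‖ := by
    intro z hz
    obtain ⟨μ, hμ1, htrμ, hrad⟩ := lox_struct (hdet z hz) (hlox z hz)
    have hz0 : z ≠ 0 := hz.2
    refine ⟨μ, hμ1, ?_, hrad⟩
    have := (htr z hz).symm.trans htrμ
    rw [← this, div_mul_cancel₀ _ (pow_ne_zero _ hz0)]
  -- f has no zero in the ball
  have hfne : ∀ z ∈ Metric.ball (0 : ℂ) 1, f z ≠ 0 := by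
    intro z hz
    by_cases hz0 : z = 0
    · rw [hz0]; exact hf0
    obtain ⟨μ, hμ1, hfz, -⟩ := hstruct z ⟨hz, hz0⟩
    rw [hfz]
    apply mul_ne_zero _ (pow_ne_zero _ hz0)
    intro h
    have hlow : ‖μ‖ - ‖μ⁻¹‖ ≤ ‖μ + μ⁻¹‖ := by
      simpa [sub_neg_eq_add] using norm_sub_norm_le μ (-μ⁻¹)
    rw [h, norm_zero, norm_inv] at hlow
    have hinv : ‖μ‖⁻¹ < 1 := inv_lt_one_of_one_lt₀ hμ1
    linarith
  -- lower bound for ‖f‖ on the sphere of radius r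
  set m : ℝ := Real.exp (c * n * L) * r ^ n - Real.exp (-(c * n * L)) * r ^ n
    with hmdef
  have hm0 : 0 < m := by
    have h1 : Real.exp (-(c * n * L)) < Real.exp (c * n * L) := by
      apply Real.exp_lt_exp.2
      have hn1 : (1 : ℝ) ≤ n := by exact_mod_cast hn
      have hp : 0 < c * (n : ℝ) * L :=
        mul_pos (mul_pos hc0 (lt_of_lt_of_le zero_lt_one hn1)) hL0
      linarith
    have h2 : (0 : ℝ) < r ^ n := pow_pos hr0 n
    simp only [hmdef]
    nlinarith
  have hsphere : ∀ z : ℂ, ‖z‖ = r → m ≤ ‖f z‖ := by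
    intro z hzr
    have hz0 : z ≠ 0 := by
      intro h; rw [h, norm_zero] at hzr; exact hr0.ne hzr
    have hzb : z ∈ Metric.ball (0 : ℂ) 1 \ {0} := by
      constructor
      · rw [Metric.mem_ball, Complex.dist_eq, sub_zero, hzr]
        exact hr1
      · exact hz0
    obtain ⟨μ, hμ1, hfz, hrad⟩ := hstruct z hzb
    have hμ0 : (0 : ℝ) < ‖μ‖ := lt_trans zero_lt_one hμ1
    -- from the length bound
    have hlen' := hlen z (by rw [hzr]; exact hr0) (by rw [hzr]; exact hrc)
    rw [hrad, hzr] at hlen'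
    have hRle : Real.exp (c * n * L) ≤ ‖μ‖ := by
      rw [← Real.exp_log hμ0]
      apply Real.exp_le_exp.2
      rw [hLdef]
      nlinarith
    have hR0 : (0 : ℝ) < Real.exp (c * n * L) := Real.exp_pos _
    have hRinv : ‖μ‖⁻¹ ≤ Real.exp (-(c * n * L)) := by
      rw [Real.exp_neg]
      exact inv_anti₀ hR0 hRle
    have hlow : ‖μ‖ - ‖μ‖⁻¹ ≤ ‖μ + μ⁻¹‖ := by
      have := norm_sub_norm_le μ (-μ⁻¹)
      simpa [sub_neg_eq_add, norm_inv] using this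
    have hfznorm : ‖f z‖ = ‖μ + μ⁻¹‖ * r ^ n := by
      rw [hfz, norm_mul, norm_pow, hzr]
    rw [hfznorm, hmdef]
    have h2 : (0 : ℝ) < r ^ n := pow_pos hr0 n
    nlinarith
  -- maximum modulus principle applied to 1/f
  have hsub : Metric.closedBall (0 : ℂ) r ⊆ Metric.ball 0 1 :=
    Metric.closedBall_subset_ball hr1
  have hg : DifferentiableOn ℂ (fun z => (f z)⁻¹) (Metric.ball (0 : ℂ) 1) :=
    hf.inv hfne
  have hd : DiffContOnCl ℂ (fun z => (f z)⁻¹) (Metric.ball (0 : ℂ) r) := by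
    apply DifferentiableOn.diffContOnCl
    rw [closure_ball (0 : ℂ) hr0.ne']
    exact hg.mono hsub
  have hmax : ‖(f 0)⁻¹‖ ≤ m⁻¹ := by
    apply Complex.norm_le_of_forall_mem_frontier_norm_le Metric.isBounded_ball hd
    · intro z hzf
      rw [frontier_ball (0 : ℂ) hr0.ne'] at hzf
      have hzr : ‖z‖ = r := by
        rw [mem_sphere_iff_norm, sub_zero] at hzf
        exact hzf
      have := hsphere z hzr
      rw [norm_inv]
      exact inv_anti₀ hm0 this
    · exact subset_closure (Metric.mem_ball_self hr0)
  have hf0norm : 0 < ‖f 0‖ := norm_pos_iff.2 hf0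
  rw [norm_inv] at hmax
  have hmf : m ≤ ‖f 0‖ := by
    rwa [inv_le_inv₀ hf0norm hm0] at hmax
  -- final arithmetic
  refine le_trans ?_ hmf
  have hrn : (r : ℝ) ^ n = Real.exp (-(n * L)) := by
    have hlr : Real.log r = -L := by rw [hLdef, one_div, Real.log_inv, neg_neg]
    rw [← Real.exp_log hr0, hlr, ← Real.exp_nat_mul]
    ring_nf
  have hmid : m = Real.exp (-(K * n)) * (1 - Real.exp (-(2 * c * n * L))) := by
    rw [hmdef, hrn, ← Real.exp_add, ← Real.exp_add, mul_sub, ← Real.exp_add, mul_one,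
      hKdef]
    ring_nf
  rw [hmid]
  have hn1 : (1 : ℝ) ≤ n := by exact_mod_cast hn
  have hfac : δ ≤ 1 - Real.exp (-(2 * c * n * L)) := by
    simp only [hδdef]
    have : Real.exp (-(2 * c * n * L)) ≤ Real.exp (-(2 * c * L)) := by
      apply Real.exp_le_exp.2
      have hp : (0 : ℝ) ≤ 2 * c * L := by positivity
      nlinarith [mul_le_mul_of_nonneg_left hn1 hp]
    linarith
  have hexp : Real.exp (-C * n) ≤ Real.exp (-(K * n)) := by
    apply Real.exp_le_exp.2
    have hKC : K ≤ C := le_trans (le_max_left _ _) (by simp only [hCdef]; linarith)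
    have := mul_le_mul_of_nonneg_right hKC (show (0:ℝ) ≤ n by positivity)
    linarith
  have hCinv : C⁻¹ ≤ δ := by
    have hδC : δ⁻¹ ≤ C := le_trans (le_max_right _ _) (by simp only [hCdef]; linarith)
    calc C⁻¹ ≤ (δ⁻¹)⁻¹ := inv_anti₀ (by positivity) hδC
    _ = δ := inv_inv δ
  calc C⁻¹ * Real.exp (-C * n) ≤ δ * Real.exp (-(K * n)) :=
        mul_le_mul hCinv hexp (Real.exp_pos _).le hδ0.le
    _ = Real.exp (-(K * n)) * δ := mul_comm _ _
    _ ≤ Real.exp (-(K * n)) * (1 - Real.exp (-(2 * c * n * L))) := by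
        apply mul_le_mul_of_nonneg_left hfac (Real.exp_pos _).le

end
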